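/- Any two Conley complexes of a finitely generated P-filtered chain complex are filtered chain isomorphic. -/

import Mathlib

set_option linter.unusedSectionVars false
set_option linter.unusedVariables false
set_option maxHeartbeats 1000000




variable (P : Type*) [PartialOrder P] [Fintype P] [DecidableEq P]

/-- A finite-dimensional `P`-filtered chain complex over `ℤ/2`: graded pieces
`C_{m,p} = (Fin (dim m p) → ZMod 2)`, boundary components
`d m p q : C_{m+1,q} → C_{m,p}` which are filtered (`d_{pq} ≠ 0 → p ≤ q`)
and square to zero. -/
structure FCC where
  dim : ℤ → P → ℕ
  d : ∀ (m : ℤ) (p q : P), (Fin (dim (m + 1) q) → ZMod 2) →ₗ[ZMod 2] (Fin (dim m p) → ZMod 2)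
  filtered : ∀ m p q, d m p q ≠ 0 → p ≤ q
  dsq : ∀ m p q, (∑ r : P, (d m p r).comp (d (m + 1) r q)) = 0

variable {P}

/-- Degreewise families of linear maps between (the graded pieces of) two filtered
chain complexes, identified with matrices of partial maps. -/
def Maps (C C' : FCC P) :=
  ∀ (m : ℤ) (p q : P), (Fin (C.dim m q) → ZMod 2) →ₗ[ZMod 2] (Fin (C'.dim m p) → ZMod 2)

/-- `f` is a `P`-filtered chain map: filtered and commuting with the boundaries. -/
def IsFilteredChainMap (C C' : FCC P) (f : Maps C C') : Prop :=
  (∀ m p q, f m p q ≠ 0 → p ≤ q) ∧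
  ∀ m p q, (∑ r : P, (C'.d m p r).comp (f (m + 1) r q)) = ∑ r : P, (f m p r).comp (C.d m r q)

/-- Composition of map families (matrix product of partial maps). -/
def compMaps {C C' C'' : FCC P} (g : Maps C' C'') (f : Maps C C') : Maps C C'' :=
  fun m p q => ∑ r : P, (g m p r).comp (f m r q)

/-- The identity map family on a filtered chain complex. -/
def idMaps (C : FCC P) : Maps C C :=
  fun m p q => if h : p = q then (by subst h; exact LinearMap.id) else 0

/-- Two map families `f, g : C → C'` are filtered chain homotopic: there is a
filtered degree `+1` map family `S` with `g - f = d' S + S d`. -/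
def FilteredHomotopic (C C' : FCC P) (f g : Maps C C') : Prop :=
  ∃ S : ∀ (m : ℤ) (p q : P),
      (Fin (C.dim m q) → ZMod 2) →ₗ[ZMod 2] (Fin (C'.dim (m + 1) p) → ZMod 2),
    (∀ m p q, S m p q ≠ 0 → p ≤ q) ∧
    ∀ m p q, g (m + 1) p q - f (m + 1) p q =
      (∑ r : P, (C'.d (m + 1) p r).comp (S (m + 1) r q)) +
        ∑ r : P, (S m p r).comp (C.d m r q)

/-- Two filtered chain complexes are filtered chain homotopic: there are filtered
chain maps in both directions whose compositions are filtered chain homotopic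
to the identities. -/
def FilteredHomotopicComplexes (C C' : FCC P) : Prop :=
  ∃ (f : Maps C C') (g : Maps C' C),
    IsFilteredChainMap C C' f ∧ IsFilteredChainMap C' C g ∧
    FilteredHomotopic C C (compMaps g f) (idMaps C) ∧
    FilteredHomotopic C' C' (compMaps f g) (idMaps C')

/-- Filtered chain isomorphism: filtered chain maps in both directions composing
to the identities. -/
def FilteredChainIso (C C' : FCC P) : Prop :=
  ∃ (f : Maps C C') (g : Maps C' C),
    IsFilteredChainMap C C' f ∧ IsFilteredChainMap C' C g ∧
    compMaps g f = idMaps C ∧ compMaps f g = idMaps C'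

/-- `Cb` is a Conley complex of `C`: filtered chain homotopic to `C` with
vanishing diagonal boundary components `d̄_{pp} = 0`. -/
def IsConleyComplex (C Cb : FCC P) : Prop :=
  FilteredHomotopicComplexes C Cb ∧ ∀ m p, Cb.d m p p = 0

section TotSec
variable {ι : Type*} [Fintype ι] [DecidableEq ι]
variable {V W X Y : ι → Type*}
variable [∀ i, AddCommGroup (V i)] [∀ i, Module (ZMod 2) (V i)]
variable [∀ i, AddCommGroup (W i)] [∀ i, Module (ZMod 2) (W i)]
variable [∀ i, AddCommGroup (X i)] [∀ i, Module (ZMod 2) (X i)]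
variable [∀ i, AddCommGroup (Y i)] [∀ i, Module (ZMod 2) (Y i)]

def Tot (a : ∀ p q, V q →ₗ[ZMod 2] W p) : (∀ q, V q) →ₗ[ZMod 2] (∀ p, W p) where
  toFun x p := ∑ q, a p q (x q)
  map_add' x y := by funext p; simp [Finset.sum_add_distrib]
  map_smul' c x := by funext p; simp [Finset.smul_sum]

@[simp] lemma Tot_apply (a : ∀ p q, V q →ₗ[ZMod 2] W p) (x : ∀ q, V q) (p : ι) :
    Tot a x p = ∑ q, a p q (x q) := rfl

def matMul (a : ∀ p q, W q →ₗ[ZMod 2] X p) (b : ∀ p q, V q →ₗ[ZMod 2] W p) :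
    ∀ p q, V q →ₗ[ZMod 2] X p :=
  fun p q => ∑ r, (a p r).comp (b r q)

def idFam : ∀ p q, V q →ₗ[ZMod 2] V p :=
  fun p q => if h : p = q then (by subst h; exact LinearMap.id) else 0

lemma Tot_matMul (a : ∀ p q, W q →ₗ[ZMod 2] X p) (b : ∀ p q, V q →ₗ[ZMod 2] W p) :
    Tot (matMul a b) = (Tot a).comp (Tot b) := by
  apply LinearMap.ext; intro x; funext p
  simp [matMul, LinearMap.sum_apply, map_sum]
  exact Finset.sum_comm

@[simp] lemma idFam_diag (p : ι) : (idFam (V := V) p p) = LinearMap.id := by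
  simp [idFam]

lemma Tot_idFam : Tot (idFam (V := V)) = LinearMap.id := by
  apply LinearMap.ext; intro x; funext p
  simp only [Tot_apply]
  rw [Finset.sum_eq_single p]
  · simp
  · intro q _ hq; rw [idFam, dif_neg (fun h => hq h.symm)]; simp
  · simp

lemma Tot_injective : Function.Injective (Tot (V := V) (W := W)) := by
  intro a b h
  funext p q
  apply LinearMap.ext; intro v
  have h1 : Tot a (Pi.single q v) p = Tot b (Pi.single q v) p := by rw [h]
  have e : ∀ (c : ∀ p q, V q →ₗ[ZMod 2] W p), Tot c (Pi.single q v) p = c p q v := by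
    intro c
    rw [Tot_apply, Finset.sum_eq_single q]
    · simp
    · intro r _ hr; rw [Pi.single_eq_of_ne hr]; simp
    · simp
  rw [e, e] at h1; exact h1

lemma Tot_sub (a b : ∀ p q, V q →ₗ[ZMod 2] W p) :
    Tot (fun p q => a p q - b p q) = Tot a - Tot b := by
  apply LinearMap.ext; intro x; funext p
  simp [Finset.sum_sub_distrib]

lemma Tot_add (a b : ∀ p q, V q →ₗ[ZMod 2] W p) :
    Tot (fun p q => a p q + b p q) = Tot a + Tot b := by
  apply LinearMap.ext; intro x; funext p
  simp [Finset.sum_add_distrib]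

lemma Tot_sumFam {κ : Type*} (s : Finset κ) (F : κ → ∀ p q, V q →ₗ[ZMod 2] W p) :
    Tot (fun p q => ∑ i ∈ s, F i p q) = ∑ i ∈ s, Tot (F i) := by
  apply LinearMap.ext; intro x; funext p
  simp [LinearMap.sum_apply, Finset.sum_apply]
  exact Finset.sum_comm

end TotSec

section FiltSec
variable {ι : Type*} [Fintype ι] [DecidableEq ι]
variable {V W X : ι → Type*}
variable [∀ i, AddCommGroup (V i)] [∀ i, Module (ZMod 2) (V i)]
variable [∀ i, AddCommGroup (W i)] [∀ i, Module (ZMod 2) (W i)]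
variable [∀ i, AddCommGroup (X i)] [∀ i, Module (ZMod 2) (X i)]

lemma sum_ne_zero_exists {κ M : Type*} [AddCommMonoid M] {s : Finset κ} {f : κ → M}
    (h : ∑ i ∈ s, f i ≠ 0) : ∃ i ∈ s, f i ≠ 0 := by
  by_contra hc
  push_neg at hc
  exact h (Finset.sum_eq_zero hc)

lemma comp_ne_zero_left {A B C : Type*} [AddCommGroup A] [AddCommGroup B] [AddCommGroup C]
    [Module (ZMod 2) A] [Module (ZMod 2) B] [Module (ZMod 2) C]
    {a : B →ₗ[ZMod 2] C} {b : A →ₗ[ZMod 2] B} (h : a.comp b ≠ 0) : a ≠ 0 ∧ b ≠ 0 := by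
  constructor
  · rintro rfl; exact h (LinearMap.zero_comp b)
  · rintro rfl; exact h (LinearMap.comp_zero a)

variable [PartialOrder ι]

lemma filt_matMul {a : ∀ p q, W q →ₗ[ZMod 2] X p} {b : ∀ p q, V q →ₗ[ZMod 2] W p}
    (ha : ∀ p q, a p q ≠ 0 → p ≤ q) (hb : ∀ p q, b p q ≠ 0 → p ≤ q) :
    ∀ p q, matMul a b p q ≠ 0 → p ≤ q := by
  intro p q h
  obtain ⟨r, -, hr⟩ := sum_ne_zero_exists h
  obtain ⟨h1, h2⟩ := comp_ne_zero_left hr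
  exact le_trans (ha p r h1) (hb r q h2)

lemma filt_idFam : ∀ p q, idFam (V := V) p q ≠ 0 → p ≤ q := by
  intro p q h
  by_contra
  rcases eq_or_ne p q with rfl | hne
  · simp_all
  · exact h (dif_neg hne)

def matPow (n : ∀ p q, V q →ₗ[ZMod 2] V p) : ℕ → ∀ p q, V q →ₗ[ZMod 2] V p
  | 0 => idFam
  | (k+1) => matMul n (matPow n k)

lemma Tot_matPow (n : ∀ p q, V q →ₗ[ZMod 2] V p) (k : ℕ) :
    Tot (matPow n k) = (Tot n) ^ k := by
  induction k with
  | zero => simp only [matPow, pow_zero]; exact Tot_idFam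
  | succ k ih =>
      rw [matPow, Tot_matMul, ih, pow_succ']
      rfl

lemma filt_matPow {n : ∀ p q, V q →ₗ[ZMod 2] V p} (hn : ∀ p q, n p q ≠ 0 → p ≤ q) (k : ℕ) :
    ∀ p q, matPow n k p q ≠ 0 → p ≤ q := by
  induction k with
  | zero => exact filt_idFam
  | succ k ih => exact filt_matMul hn ih

lemma matPow_card_eq_zero {n : ∀ p q, V q →ₗ[ZMod 2] V p}
    (hn : ∀ p q, n p q ≠ 0 → p < q) :
    matPow n (Fintype.card ι) = 0 := by
  have key : ∀ k p q, matPow n k p q ≠ 0 →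
      {r : ι | r ≤ p}.ncard + k ≤ {r : ι | r ≤ q}.ncard := by
    intro k
    induction k with
    | zero =>
        intro p q h
        rcases eq_or_ne p q with rfl | hne
        · simp
        · exact absurd (dif_neg hne) h
    | succ k ih =>
        intro p q h
        obtain ⟨r, -, hr⟩ := sum_ne_zero_exists h
        obtain ⟨h1, h2⟩ := comp_ne_zero_left hr
        have hpr : p < r := hn p r h1
        have hk := ih r q h2
        have hlt : {s : ι | s ≤ p}.ncard < {s : ι | s ≤ r}.ncard := by
          apply Set.ncard_lt_ncard
          · constructor
            · intro s hs; exact le_trans hs hpr.le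
            · intro hsub
              exact absurd (hsub (le_refl r)) (not_le_of_gt hpr)
          · exact Set.toFinite _
        omega
  funext p q
  by_contra h
  have h1 := key _ p q h
  have h2 : {r : ι | r ≤ q}.ncard ≤ Fintype.card ι := by
    have := Set.ncard_le_ncard (Set.subset_univ {r : ι | r ≤ q}) (Set.toFinite _)
    simpa [Set.ncard_univ] using this
  have h3 : 0 < {r : ι | r ≤ p}.ncard := by
    exact (Set.ncard_pos (Set.toFinite _)).mpr ⟨p, le_refl p⟩
  omega

lemma geom_inverse {n : ∀ p q, V q →ₗ[ZMod 2] V p}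
    (hnil : matPow n (Fintype.card ι) = 0) :
    matMul (fun p q => idFam p q - n p q)
      (fun p q => ∑ i ∈ Finset.range (Fintype.card ι), matPow n i p q) = idFam ∧
    matMul (fun p q => ∑ i ∈ Finset.range (Fintype.card ι), matPow n i p q)
      (fun p q => idFam p q - n p q) = idFam := by
  set c := Fintype.card ι
  have hX : (Tot n) ^ c = 0 := by
    rw [← Tot_matPow, hnil]
    apply LinearMap.ext; intro x; funext p; simp
  have hG : Tot (fun p q => ∑ i ∈ Finset.range c, matPow n i p q)
      = ∑ i ∈ Finset.range c, (Tot n) ^ i := by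
    rw [Tot_sumFam]
    exact Finset.sum_congr rfl fun i _ => Tot_matPow n i
  have hU : Tot (fun p q => idFam (V := V) p q - n p q) = 1 - Tot n := by
    rw [Tot_sub, Tot_idFam]; rfl
  constructor
  · apply Tot_injective
    rw [Tot_matMul, hU, hG, Tot_idFam]
    have hh := mul_geom_sum (Tot n) c
    rw [hX, zero_sub] at hh
    have h2 : (1 - Tot n) * ∑ i ∈ Finset.range c, (Tot n) ^ i = 1 := by
      calc (1 - Tot n) * ∑ i ∈ Finset.range c, (Tot n) ^ i
          = -((Tot n - 1) * ∑ i ∈ Finset.range c, (Tot n) ^ i) := by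
            rw [sub_mul, sub_mul, one_mul, neg_sub]
        _ = 1 := by rw [hh, neg_neg]
    calc (1 - Tot n).comp (∑ i ∈ Finset.range c, (Tot n) ^ i)
        = (1 - Tot n) * ∑ i ∈ Finset.range c, (Tot n) ^ i := rfl
      _ = 1 := h2
      _ = LinearMap.id := rfl
  · apply Tot_injective
    rw [Tot_matMul, hU, hG, Tot_idFam]
    have hh := geom_sum_mul (Tot n) c
    rw [hX, zero_sub] at hh
    have h2 : (∑ i ∈ Finset.range c, (Tot n) ^ i) * (1 - Tot n) = 1 := by
      calc (∑ i ∈ Finset.range c, (Tot n) ^ i) * (1 - Tot n)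
          = -((∑ i ∈ Finset.range c, (Tot n) ^ i) * (Tot n - 1)) := by
            rw [mul_sub, mul_sub, mul_one, neg_sub]
        _ = 1 := by rw [hh, neg_neg]
    calc (∑ i ∈ Finset.range c, (Tot n) ^ i).comp (1 - Tot n)
        = (∑ i ∈ Finset.range c, (Tot n) ^ i) * (1 - Tot n) := rfl
      _ = 1 := h2
      _ = LinearMap.id := rfl

lemma matMul_assoc {U : ι → Type*} [∀ i, AddCommGroup (U i)] [∀ i, Module (ZMod 2) (U i)]
    (a : ∀ p q, X q →ₗ[ZMod 2] U p) (b : ∀ p q, W q →ₗ[ZMod 2] X p)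
    (cc : ∀ p q, V q →ₗ[ZMod 2] W p) :
    matMul a (matMul b cc) = matMul (matMul a b) cc := by
  apply Tot_injective
  rw [Tot_matMul, Tot_matMul, Tot_matMul, Tot_matMul, LinearMap.comp_assoc]

lemma matMul_id_left (a : ∀ p q, V q →ₗ[ZMod 2] W p) : matMul idFam a = a := by
  apply Tot_injective
  rw [Tot_matMul, Tot_idFam, LinearMap.id_comp]

lemma matMul_id_right (a : ∀ p q, V q →ₗ[ZMod 2] W p) : matMul a idFam = a := by
  apply Tot_injective
  rw [Tot_matMul, Tot_idFam, LinearMap.comp_id]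

end FiltSec

-- ============ bridge lemmas ============

lemma compMaps_eq {C C' C'' : FCC P} (g : Maps C' C'') (f : Maps C C') (m : ℤ) :
    compMaps g f m = matMul (g m) (f m) := rfl

lemma idMaps_eq (C : FCC P) (m : ℤ) :
    idMaps C m = (idFam : ∀ p q, (Fin (C.dim m q) → ZMod 2) →ₗ[ZMod 2] (Fin (C.dim m p) → ZMod 2)) :=
  rfl

lemma chain_tot {C C' : FCC P} {f : Maps C C'} (hf : IsFilteredChainMap C C' f) (m : ℤ) :
    (Tot (C'.d m)).comp (Tot (f (m + 1))) = (Tot (f m)).comp (Tot (C.d m)) := by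
  rw [← Tot_matMul, ← Tot_matMul]
  exact congrArg Tot (funext fun p => funext fun q => hf.2 m p q)

lemma compMaps_assoc {C C' C'' C''' : FCC P} (a : Maps C'' C''') (b : Maps C' C'')
    (c : Maps C C') : compMaps a (compMaps b c) = compMaps (compMaps a b) c :=
  funext fun m => matMul_assoc (a m) (b m) (c m)

lemma compMaps_id_left {C C' : FCC P} (f : Maps C C') : compMaps (idMaps C') f = f :=
  funext fun m => matMul_id_left (f m)

lemma compMaps_id_right {C C' : FCC P} (f : Maps C C') : compMaps f (idMaps C) = f :=
  funext fun m => matMul_id_right (f m)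

lemma filt_compMaps {C C' C'' : FCC P} {g : Maps C' C''} {f : Maps C C'}
    (hg : ∀ m p q, g m p q ≠ 0 → p ≤ q) (hf : ∀ m p q, f m p q ≠ 0 → p ≤ q) :
    ∀ m p q, compMaps g f m p q ≠ 0 → p ≤ q :=
  fun m => filt_matMul (hg m) (hf m)

lemma chain_comp {C C' C'' : FCC P} {g : Maps C' C''} {f : Maps C C'}
    (hg : IsFilteredChainMap C' C'' g) (hf : IsFilteredChainMap C C' f) :
    IsFilteredChainMap C C'' (compMaps g f) := by
  refine ⟨filt_compMaps hg.1 hf.1, fun m p q => ?_⟩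
  have key : matMul (C''.d m) (compMaps g f (m + 1)) = matMul (compMaps g f m) (C.d m) := by
    apply Tot_injective
    rw [Tot_matMul, Tot_matMul, compMaps_eq, compMaps_eq, Tot_matMul, Tot_matMul,
      ← LinearMap.comp_assoc, chain_tot hg m, LinearMap.comp_assoc, chain_tot hf m,
      LinearMap.comp_assoc]
  exact congrFun (congrFun key p) q

lemma homo_tot {C C' : FCC P} {f g : Maps C C'}
    {S : ∀ (m : ℤ) (p q : P),
      (Fin (C.dim m q) → ZMod 2) →ₗ[ZMod 2] (Fin (C'.dim (m + 1) p) → ZMod 2)}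
    (hS : ∀ m p q, g (m + 1) p q - f (m + 1) p q =
      (∑ r : P, (C'.d (m + 1) p r).comp (S (m + 1) r q)) +
        ∑ r : P, (S m p r).comp (C.d m r q)) (m : ℤ) :
    Tot (g (m + 1)) - Tot (f (m + 1)) =
      (Tot (C'.d (m + 1))).comp (Tot (S (m + 1))) + (Tot (S m)).comp (Tot (C.d m)) := by
  have e : (fun p q => g (m + 1) p q - f (m + 1) p q)
      = (fun p q => matMul (C'.d (m + 1)) (S (m + 1)) p q + matMul (S m) (C.d m) p q) :=
    funext fun p => funext fun q => hS m p q
  have h2 := congrArg Tot e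
  rwa [Tot_sub, Tot_add, Tot_matMul, Tot_matMul] at h2

lemma tot_homo {C C' : FCC P} {f g : Maps C C'}
    {S : ∀ (m : ℤ) (p q : P),
      (Fin (C.dim m q) → ZMod 2) →ₗ[ZMod 2] (Fin (C'.dim (m + 1) p) → ZMod 2)}
    (h : ∀ m, Tot (g (m + 1)) - Tot (f (m + 1)) =
      (Tot (C'.d (m + 1))).comp (Tot (S (m + 1))) + (Tot (S m)).comp (Tot (C.d m))) :
    ∀ m p q, g (m + 1) p q - f (m + 1) p q =
      (∑ r : P, (C'.d (m + 1) p r).comp (S (m + 1) r q)) +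
        ∑ r : P, (S m p r).comp (C.d m r q) := by
  intro m p q
  have e : (fun p q => g (m + 1) p q - f (m + 1) p q)
      = (fun p q => matMul (C'.d (m + 1)) (S (m + 1)) p q + matMul (S m) (C.d m) p q) := by
    apply Tot_injective
    rw [Tot_sub, Tot_add, Tot_matMul, Tot_matMul]
    exact h m
  exact congrFun (congrFun e p) q

lemma homotopic_trans {C C' : FCC P} {f g h : Maps C C'}
    (h1 : FilteredHomotopic C C' f g) (h2 : FilteredHomotopic C C' g h) :
    FilteredHomotopic C C' f h := by
  obtain ⟨S, hSf, hS⟩ := h1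
  obtain ⟨T, hTf, hT⟩ := h2
  refine ⟨fun m p q => S m p q + T m p q, ?_, ?_⟩
  · intro m p q hne
    rcases ne_or_eq (S m p q) 0 with hs | hs
    · exact hSf m p q hs
    · rcases ne_or_eq (T m p q) 0 with ht | ht
      · exact hTf m p q ht
      · exfalso; apply hne; show S m p q + T m p q = 0; rw [hs, ht, add_zero]
  · refine tot_homo (f := f) (g := h) (S := fun m p q => S m p q + T m p q) (fun m => ?_)
    have e1 := homo_tot hS m
    have e2 := homo_tot hT m
    have e0 : Tot (h (m + 1)) - Tot (f (m + 1))
        = (Tot (g (m + 1)) - Tot (f (m + 1))) + (Tot (h (m + 1)) - Tot (g (m + 1))) := by abel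
    rw [e0, e1, e2]
    have eS : Tot (fun p q => S (m + 1) p q + T (m + 1) p q)
        = Tot (S (m + 1)) + Tot (T (m + 1)) := Tot_add _ _
    have eT : Tot (fun p q => S m p q + T m p q) = Tot (S m) + Tot (T m) := Tot_add _ _
    show _ = (Tot (C'.d (m + 1))).comp (Tot (fun p q => S (m + 1) p q + T (m + 1) p q))
        + (Tot (fun p q => S m p q + T m p q)).comp (Tot (C.d m))
    rw [eS, eT, LinearMap.comp_add, LinearMap.add_comp]
    abel

lemma homotopic_postcomp {C C' C'' : FCC P} {f g : Maps C C'} (α : Maps C' C'')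
    (hα : IsFilteredChainMap C' C'' α) (h : FilteredHomotopic C C' f g) :
    FilteredHomotopic C C'' (compMaps α f) (compMaps α g) := by
  obtain ⟨S, hSf, hS⟩ := h
  refine ⟨fun m => matMul (α (m + 1)) (S m), ?_, ?_⟩
  · intro m; exact filt_matMul (hα.1 (m + 1)) (hSf m)
  · refine tot_homo (f := compMaps α f) (g := compMaps α g)
      (S := fun m => matMul (α (m + 1)) (S m)) (fun m => ?_)
    have e := homo_tot hS m
    show Tot (compMaps α g (m + 1)) - Tot (compMaps α f (m + 1))
        = (Tot (C''.d (m + 1))).comp (Tot (matMul (α (m + 1 + 1)) (S (m + 1))))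
          + (Tot (matMul (α (m + 1)) (S m))).comp (Tot (C.d m))
    rw [compMaps_eq, compMaps_eq, Tot_matMul, Tot_matMul, ← LinearMap.comp_sub, e,
      Tot_matMul, Tot_matMul, LinearMap.comp_add]
    simp only [← LinearMap.comp_assoc]
    rw [chain_tot hα (m + 1)]

lemma homotopic_precomp {C C' C'' : FCC P} {f g : Maps C C'} (α : Maps C'' C)
    (hα : IsFilteredChainMap C'' C α) (h : FilteredHomotopic C C' f g) :
    FilteredHomotopic C'' C' (compMaps f α) (compMaps g α) := by
  obtain ⟨S, hSf, hS⟩ := h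
  refine ⟨fun m => matMul (S m) (α m), ?_, ?_⟩
  · intro m; exact filt_matMul (hSf m) (hα.1 m)
  · refine tot_homo (f := compMaps f α) (g := compMaps g α)
      (S := fun m => matMul (S m) (α m)) (fun m => ?_)
    have e := homo_tot hS m
    show Tot (compMaps g α (m + 1)) - Tot (compMaps f α (m + 1))
        = (Tot (C'.d (m + 1))).comp (Tot (matMul (S (m + 1)) (α (m + 1))))
          + (Tot (matMul (S m) (α m))).comp (Tot (C''.d m))
    rw [compMaps_eq, compMaps_eq, Tot_matMul, Tot_matMul, ← LinearMap.sub_comp, e,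
      Tot_matMul, Tot_matMul, LinearMap.add_comp]
    simp only [LinearMap.comp_assoc]
    rw [chain_tot hα m]

lemma diag_of_homotopic_id {C1 : FCC P} (hd : ∀ m p, C1.d m p p = 0) {u : Maps C1 C1}
    (hu : FilteredHomotopic C1 C1 u (idMaps C1)) : ∀ m p, u m p p = idMaps C1 m p p := by
  obtain ⟨S, hSf, hS⟩ := hu
  intro m p
  obtain ⟨k, rfl⟩ : ∃ k, k + 1 = m := ⟨m - 1, by ring⟩
  have h := hS k p p
  have z1 : (∑ r : P, (C1.d (k + 1) p r).comp (S (k + 1) r p)) = 0 := by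
    apply Finset.sum_eq_zero
    intro r _
    by_contra hz
    obtain ⟨h1, h2⟩ := comp_ne_zero_left hz
    have heq : r = p := le_antisymm (hSf (k + 1) r p h2) (C1.filtered (k + 1) p r h1)
    rw [heq] at h1
    exact h1 (hd (k + 1) p)
  have z2 : (∑ r : P, (S k p r).comp (C1.d k r p)) = 0 := by
    apply Finset.sum_eq_zero
    intro r _
    by_contra hz
    obtain ⟨h1, h2⟩ := comp_ne_zero_left hz
    have heq : r = p := le_antisymm (C1.filtered k r p h2) (hSf k p r h1)
    rw [heq] at h2
    exact h2 (hd k p)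
  rw [z1, z2, add_zero] at h
  exact (sub_eq_zero.mp h).symm


/-- Any two Conley complexes of a finitely generated `P`-filtered chain complex
are filtered chain isomorphic. -/
theorem stmt_8 (C C1 C2 : FCC P)
    (hfin : {m : ℤ | ∃ p, C.dim m p ≠ 0}.Finite)
    (h1 : IsConleyComplex C C1) (h2 : IsConleyComplex C C2) :
    FilteredChainIso C1 C2 := by
  obtain ⟨⟨f1, g1, hf1, hg1, hgf1, hfg1⟩, hd1⟩ := h1
  obtain ⟨⟨f2, g2, hf2, hg2, hgf2, hfg2⟩, hd2⟩ := h2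
  set F : Maps C1 C2 := compMaps f2 g1 with hFdef
  set G : Maps C2 C1 := compMaps f1 g2 with hGdef
  have hF : IsFilteredChainMap C1 C2 F := chain_comp hf2 hg1
  have hG : IsFilteredChainMap C2 C1 G := chain_comp hf1 hg2
  -- G ∘ F is homotopic to the identity of C1
  have hu : FilteredHomotopic C1 C1 (compMaps G F) (idMaps C1) := by
    have e : compMaps G F = compMaps (compMaps f1 (compMaps g2 f2)) g1 := by
      rw [hFdef, hGdef, compMaps_assoc, ← compMaps_assoc f1 g2 f2]
    rw [e]
    have step1 := homotopic_postcomp f1 hf1 hgf2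
    rw [compMaps_id_right] at step1
    exact homotopic_trans (homotopic_precomp g1 hg1 step1) hfg1
  -- F ∘ G is homotopic to the identity of C2
  have hv : FilteredHomotopic C2 C2 (compMaps F G) (idMaps C2) := by
    have e : compMaps F G = compMaps (compMaps f2 (compMaps g1 f1)) g2 := by
      rw [hFdef, hGdef, compMaps_assoc, ← compMaps_assoc f2 g1 f1]
    rw [e]
    have step1 := homotopic_postcomp f2 hf2 hgf1
    rw [compMaps_id_right] at step1
    exact homotopic_trans (homotopic_precomp g2 hg2 step1) hfg2
  have hud : ∀ m p, compMaps G F m p p = idMaps C1 m p p := diag_of_homotopic_id hd1 hu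
  have hvd : ∀ m p, compMaps F G m p p = idMaps C2 m p p := diag_of_homotopic_id hd2 hv
  set c : ℕ := Fintype.card P with hc
  -- the "strictly filtered" parts
  set N : ∀ m p q, (Fin (C1.dim m q) → ZMod 2) →ₗ[ZMod 2] (Fin (C1.dim m p) → ZMod 2) :=
    fun m p q => idFam (V := fun i => Fin (C1.dim m i) → ZMod 2) p q - compMaps G F m p q with hNdef
  set M : ∀ m p q, (Fin (C2.dim m q) → ZMod 2) →ₗ[ZMod 2] (Fin (C2.dim m p) → ZMod 2) :=
    fun m p q => idFam (V := fun i => Fin (C2.dim m i) → ZMod 2) p q - compMaps F G m p q with hMdef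
  have hNs : ∀ m p q, N m p q ≠ 0 → p < q := by
    intro m p q h
    rcases eq_or_ne p q with rfl | hne
    · exfalso; apply h
      show idFam (V := fun i => Fin (C1.dim m i) → ZMod 2) p p - compMaps G F m p p = 0
      rw [hud m p, ← idMaps_eq, sub_self]
    · refine lt_of_le_of_ne ?_ hne
      have hsub : idFam (V := fun i => Fin (C1.dim m i) → ZMod 2) p q ≠ 0
          ∨ compMaps G F m p q ≠ 0 := by
        by_contra hcon
        push_neg at hcon
        apply h
        show idFam (V := fun i => Fin (C1.dim m i) → ZMod 2) p q - compMaps G F m p q = 0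
        rw [hcon.1, hcon.2, sub_zero]
      rcases hsub with h' | h'
      · exact filt_idFam p q h'
      · exact filt_compMaps hG.1 hF.1 m p q h'
  have hMs : ∀ m p q, M m p q ≠ 0 → p < q := by
    intro m p q h
    rcases eq_or_ne p q with rfl | hne
    · exfalso; apply h
      show idFam (V := fun i => Fin (C2.dim m i) → ZMod 2) p p - compMaps F G m p p = 0
      rw [hvd m p, ← idMaps_eq, sub_self]
    · refine lt_of_le_of_ne ?_ hne
      have hsub : idFam (V := fun i => Fin (C2.dim m i) → ZMod 2) p q ≠ 0
          ∨ compMaps F G m p q ≠ 0 := by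
        by_contra hcon
        push_neg at hcon
        apply h
        show idFam (V := fun i => Fin (C2.dim m i) → ZMod 2) p q - compMaps F G m p q = 0
        rw [hcon.1, hcon.2, sub_zero]
      rcases hsub with h' | h'
      · exact filt_idFam p q h'
      · exact filt_compMaps hF.1 hG.1 m p q h'
  -- geometric-series inverses
  set W : Maps C1 C1 := fun m p q => ∑ i ∈ Finset.range c, matPow (N m) i p q with hWdef
  set W' : Maps C2 C2 := fun m p q => ∑ i ∈ Finset.range c, matPow (M m) i p q with hW'def
  have eN : ∀ m, (fun p q => idFam (V := fun i => Fin (C1.dim m i) → ZMod 2) p q - N m p q)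
      = compMaps G F m := by
    intro m; funext p q
    show idFam (V := fun i => Fin (C1.dim m i) → ZMod 2) p q
        - (idFam (V := fun i => Fin (C1.dim m i) → ZMod 2) p q - compMaps G F m p q)
        = compMaps G F m p q
    rw [sub_sub_cancel]
  have eM : ∀ m, (fun p q => idFam (V := fun i => Fin (C2.dim m i) → ZMod 2) p q - M m p q)
      = compMaps F G m := by
    intro m; funext p q
    show idFam (V := fun i => Fin (C2.dim m i) → ZMod 2) p q
        - (idFam (V := fun i => Fin (C2.dim m i) → ZMod 2) p q - compMaps F G m p q)
        = compMaps F G m p q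
    rw [sub_sub_cancel]
  have hgeoN := fun m => geom_inverse (matPow_card_eq_zero (fun p q => hNs m p q))
  have hgeoM := fun m => geom_inverse (matPow_card_eq_zero (fun p q => hMs m p q))
  have hW2 : ∀ m, matMul (W m) (compMaps G F m) = idFam := by
    intro m
    have := (hgeoN m).2
    rwa [eN m] at this
  have hW'1 : ∀ m, matMul (compMaps F G m) (W' m) = idFam := by
    intro m
    have := (hgeoM m).1
    rwa [eM m] at this
  have hWfilt : ∀ m p q, W m p q ≠ 0 → p ≤ q := by
    intro m p q h
    obtain ⟨i, -, hi⟩ := sum_ne_zero_exists h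
    exact filt_matPow (fun p q hh => (hNs m p q hh).le) i p q hi
  set L : Maps C2 C1 := compMaps W G with hLdef
  set R : Maps C2 C1 := compMaps G W' with hRdef
  have hLF : compMaps L F = idMaps C1 := by
    rw [hLdef, ← compMaps_assoc]
    funext m
    rw [compMaps_eq, idMaps_eq]
    exact hW2 m
  have hFR : compMaps F R = idMaps C2 := by
    rw [hRdef, compMaps_assoc]
    funext m
    rw [compMaps_eq, idMaps_eq]
    exact hW'1 m
  have hLR : L = R := by
    calc L = compMaps L (idMaps C2) := (compMaps_id_right L).symm
      _ = compMaps L (compMaps F R) := by rw [hFR]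
      _ = compMaps (compMaps L F) R := compMaps_assoc _ _ _
      _ = compMaps (idMaps C1) R := by rw [hLF]
      _ = R := compMaps_id_left R
  have hFL : compMaps F L = idMaps C2 := by rw [hLR]; exact hFR
  -- L is a filtered chain map
  have hTL : ∀ m, (Tot (L m)).comp (Tot (F m)) = LinearMap.id := by
    intro m
    have h0 : compMaps L F m = idMaps C1 m := congrFun hLF m
    rw [compMaps_eq, idMaps_eq] at h0
    rw [← Tot_matMul, h0, Tot_idFam]
  have hTF : ∀ m, (Tot (F m)).comp (Tot (L m)) = LinearMap.id := by
    intro m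
    have h0 : compMaps F L m = idMaps C2 m := congrFun hFL m
    rw [compMaps_eq, idMaps_eq] at h0
    rw [← Tot_matMul, h0, Tot_idFam]
  have hLchain : ∀ m p q, (∑ r : P, (C1.d m p r).comp (L (m + 1) r q))
      = ∑ r : P, (L m p r).comp (C2.d m r q) := by
    intro m p q
    have key : matMul (C1.d m) (L (m + 1)) = matMul (L m) (C2.d m) := by
      apply Tot_injective
      rw [Tot_matMul, Tot_matMul]
      calc (Tot (C1.d m)).comp (Tot (L (m + 1)))
          = ((Tot (L m)).comp (Tot (F m))).comp ((Tot (C1.d m)).comp (Tot (L (m + 1)))) := by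
            rw [hTL m, LinearMap.id_comp]
        _ = (Tot (L m)).comp (((Tot (F m)).comp (Tot (C1.d m))).comp (Tot (L (m + 1)))) := by
            simp only [LinearMap.comp_assoc]
        _ = (Tot (L m)).comp (((Tot (C2.d m)).comp (Tot (F (m + 1)))).comp (Tot (L (m + 1)))) := by
            rw [← chain_tot hF m]
        _ = (Tot (L m)).comp ((Tot (C2.d m)).comp ((Tot (F (m + 1))).comp (Tot (L (m + 1))))) := by
            simp only [LinearMap.comp_assoc]
        _ = (Tot (L m)).comp (Tot (C2.d m)) := by rw [hTF (m + 1), LinearMap.comp_id]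
    exact congrFun (congrFun key p) q
  exact ⟨F, L, hF, ⟨filt_compMaps hWfilt hG.1, hLchain⟩, hLF, hFL⟩
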